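/- arXiv:1604.02992 — 4 statements merged into one kernel-verified Lean document; each statement's English description precedes it below -/
import Mathlib

section
/- Let x ≥ 0, ε > 0, and let M be a natural number with M ≥ (e+1)x + log(1/ε) − 1. Then ∑_{i=M+1}^∞ x^i/i! ≤ ε. -/
set_option maxHeartbeats 1000000

lemma tsum_pow_div_factorial_eq_exp (x : ℝ) :
    (∑' n : ℕ, x ^ n / n.factorial) = Real.exp x := by
  rw [Real.exp_eq_exp_ℝ, NormedSpace.exp_eq_tsum_div]

lemma exp_tail_le_eps_aux (x ε : ℝ) (N : ℕ) (hx : 0 < x) (hε : 0 < ε)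
    (hN1 : 1 ≤ N) (hNb : (Real.exp 1 + 1) * x - Real.log ε ≤ (N : ℝ)) :
    (∑' i : ℕ, x ^ (N + i) / (Nat.factorial (N + i))) ≤ ε := by
  have hNpos : (0:ℝ) < N := by exact_mod_cast Nat.lt_of_lt_of_le Nat.zero_lt_one hN1
  have hterm : ∀ i : ℕ, x ^ (N + i) / (N + i).factorial ≤
      (x ^ N / N.factorial) * (x ^ i / i.factorial) := by
    intro i
    rw [pow_add, div_mul_div_comm]
    apply div_le_div_of_nonneg_left (by positivity) (by positivity)
    exact_mod_cast Nat.le_of_dvd (by positivity)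
      (Nat.factorial_mul_factorial_dvd_factorial_add N i)
  have hsum : Summable (fun n : ℕ => x ^ n / n.factorial) :=
    Real.summable_pow_div_factorial x
  have hsum1 : Summable (fun i : ℕ => x ^ (N + i) / (N + i).factorial) := by
    have := (summable_nat_add_iff (f := fun n : ℕ => x ^ n / n.factorial) N).2 hsum
    simpa [add_comm] using this
  have hsum2 : Summable (fun i : ℕ => (x ^ N / N.factorial) * (x ^ i / i.factorial)) :=
    hsum.mul_left _
  have h1 : (∑' i : ℕ, x ^ (N + i) / (N + i).factorial) ≤
      (x ^ N / N.factorial) * Real.exp x := by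
    rw [← tsum_pow_div_factorial_eq_exp x, ← hsum.tsum_mul_left]
    exact Summable.tsum_le_tsum hterm hsum1 hsum2
  refine h1.trans ?_
  have hfacpos : (0:ℝ) < N.factorial := by positivity
  -- Stirling-type bound : N^N / exp N ≤ N!
  have hfac : (N:ℝ) ^ N / Real.exp N ≤ N.factorial := by
    rw [div_le_iff₀ (Real.exp_pos _)]
    have := Real.pow_div_factorial_le_exp (x := (N:ℝ)) hNpos.le N
    rw [div_le_iff₀ (by positivity)] at this
    linarith
  have h2 : x ^ N / N.factorial * Real.exp x ≤
      (Real.exp 1 * x / N) ^ N * Real.exp x := by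
    apply mul_le_mul_of_nonneg_right _ (Real.exp_pos x).le
    rw [div_le_iff₀ hfacpos]
    calc x ^ N = ((N:ℝ) ^ N / Real.exp N) * ((Real.exp 1 * x / N) ^ N) := by
          rw [div_pow, mul_pow, ← Real.exp_nat_mul]
          field_simp
      _ ≤ (N.factorial : ℝ) * ((Real.exp 1 * x / N) ^ N) :=
          mul_le_mul_of_nonneg_right hfac (by positivity)
      _ = (Real.exp 1 * x / N) ^ N * N.factorial := by ring
  refine h2.trans ?_
  have hq : (0:ℝ) < Real.exp 1 * x / N := by positivity
  have hlhs : (Real.exp 1 * x / N) ^ N * Real.exp x =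
      Real.exp (N * Real.log (Real.exp 1 * x / N) + x) := by
    rw [Real.exp_add, Real.exp_nat_mul, Real.exp_log hq]
  rw [hlhs, ← Real.exp_log hε, Real.exp_le_exp]
  have hlog : Real.log (Real.exp 1 * x / N) ≤ Real.exp 1 * x / N - 1 :=
    Real.log_le_sub_one_of_pos hq
  have h3 : (N:ℝ) * Real.log (Real.exp 1 * x / N) ≤ Real.exp 1 * x - N :=
    calc (N:ℝ) * Real.log (Real.exp 1 * x / N) ≤ N * (Real.exp 1 * x / N - 1) :=
          mul_le_mul_of_nonneg_left hlog hNpos.le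
      _ = Real.exp 1 * x - N := by field_simp
  linarith

theorem exp_tail_le_eps (x ε : ℝ) (M : ℕ) (hx : 0 ≤ x) (hε : 0 < ε)
    (hM : (Real.exp 1 + 1) * x + Real.log (1 / ε) - 1 ≤ (M : ℝ)) :
    (∑' i : ℕ, x ^ (M + 1 + i) / (Nat.factorial (M + 1 + i))) ≤ ε := by
  rcases eq_or_lt_of_le hx with h0 | hxpos
  · simp [← h0, zero_pow (by omega : M + 1 + 0 ≠ 0)]
    exact hε.le
  refine exp_tail_le_eps_aux x ε (M + 1) hxpos hε (by omega) ?_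
  rw [one_div, Real.log_inv] at hM
  push_cast
  linarith
end

section
/- Grönwall inequality with two-variable kernel: Let J = [α, β], let u : J → ℝ be continuous, let g(t,s) be continuous and nonnegative on the triangle α ≤ s ≤ t ≤ β and nondecreasing in t for each fixed s, and let n : J → ℝ be positive, continuous, and nondecreasing. If u(t) ≤ n(t) + ∫_α^t g(t,s) u(s) ds for all t ∈ J, then u(t) ≤ n(t) · exp(∫_α^t g(t,s) ds) for all t ∈ J. -/
open intervalIntegral

/-- Basic Grönwall inequality with a one-variable continuous kernel. -/
lemma gronwall_aux (a b : ℝ) (φ k : ℝ → ℝ) (C : ℝ)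
    (hφ : Continuous φ) (hk : Continuous k)
    (hknn : ∀ s ∈ Set.Icc a b, 0 ≤ k s)
    (h : ∀ t ∈ Set.Icc a b, φ t ≤ C + ∫ s in a..t, k s * φ s) :
    ∀ t ∈ Set.Icc a b, φ t ≤ C * Real.exp (∫ s in a..t, k s) := by
  set V : ℝ → ℝ := fun t => ∫ s in a..t, k s * φ s with hV
  set K : ℝ → ℝ := fun t => ∫ s in a..t, k s with hK
  have hkφ : Continuous fun s => k s * φ s := hk.mul hφ
  have hVd : ∀ t : ℝ, HasDerivAt V (k t * φ t) t := fun t =>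
    intervalIntegral.integral_hasDerivAt_right (hkφ.intervalIntegrable a t)
      (hkφ.aestronglyMeasurable.stronglyMeasurableAtFilter) hkφ.continuousAt
  have hKd : ∀ t : ℝ, HasDerivAt K (k t) t := fun t =>
    intervalIntegral.integral_hasDerivAt_right (hk.intervalIntegrable a t)
      (hk.aestronglyMeasurable.stronglyMeasurableAtFilter) hk.continuousAt
  set F : ℝ → ℝ := fun t => (C + V t) * Real.exp (-K t) with hF
  have hFd : ∀ t : ℝ, HasDerivAt F
      (k t * φ t * Real.exp (-K t) + (C + V t) * (Real.exp (-K t) * (-(k t)))) t := by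
    intro t
    exact ((hVd t).const_add C).mul (((hKd t).neg).exp)
  have hFd' : ∀ t ∈ Set.Ioo a b, deriv F t ≤ 0 := by
    intro t ht
    rw [(hFd t).deriv]
    have ht' : t ∈ Set.Icc a b := Set.mem_Icc_of_Ioo ht
    have h1 : φ t ≤ C + V t := h t ht'
    have h2 : 0 ≤ k t := hknn t ht'
    have h3 : (0:ℝ) < Real.exp (-K t) := Real.exp_pos _
    nlinarith [mul_le_mul_of_nonneg_left h1 h2]
  have hFcont : Continuous F := by
    have : Continuous V := continuous_iff_continuousAt.mpr fun t => (hVd t).continuousAt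
    fun_prop
  have hanti : AntitoneOn F (Set.Icc a b) := by
    apply antitoneOn_of_deriv_nonpos (convex_Icc a b) hFcont.continuousOn
    · intro t ht
      exact (hFd t).differentiableAt.differentiableWithinAt
    · intro t ht
      rw [interior_Icc] at ht
      exact hFd' t ht
  intro t ht
  have hFa : F a = C := by
    simp [hF, hV, hK, intervalIntegral.integral_same]
  have hFt : F t ≤ C := by
    rw [← hFa]
    exact hanti (Set.left_mem_Icc.2 (le_trans ht.1 ht.2)) ht ht.1
  have hKe : (0:ℝ) < Real.exp (K t) := Real.exp_pos _
  have h1 : φ t ≤ C + V t := h t ht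
  have h2 : (C + V t) * Real.exp (-K t) ≤ C := hFt
  have h3 : C + V t ≤ C * Real.exp (K t) := by
    have := mul_le_mul_of_nonneg_right h2 hKe.le
    rwa [mul_assoc, ← Real.exp_add, neg_add_cancel, Real.exp_zero, mul_one] at this
  linarith

theorem gronwall_two_variable_kernel (α β : ℝ) (hαβ : α ≤ β)
    (u n : ℝ → ℝ) (g : ℝ → ℝ → ℝ)
    (hu : ContinuousOn u (Set.Icc α β))
    (hg_cont : ContinuousOn (fun p : ℝ × ℝ => g p.1 p.2)
      {p : ℝ × ℝ | α ≤ p.2 ∧ p.2 ≤ p.1 ∧ p.1 ≤ β})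
    (hg_nonneg : ∀ t s, α ≤ s → s ≤ t → t ≤ β → 0 ≤ g t s)
    (hg_mono : ∀ s t₁ t₂, α ≤ s → s ≤ t₁ → t₁ ≤ t₂ → t₂ ≤ β → g t₁ s ≤ g t₂ s)
    (hn_pos : ∀ t ∈ Set.Icc α β, 0 < n t)
    (hn_cont : ContinuousOn n (Set.Icc α β))
    (hn_mono : ∀ t₁ ∈ Set.Icc α β, ∀ t₂ ∈ Set.Icc α β, t₁ ≤ t₂ → n t₁ ≤ n t₂)
    (hineq : ∀ t ∈ Set.Icc α β, u t ≤ n t + ∫ s in α..t, g t s * u s) :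
    ∀ t ∈ Set.Icc α β, u t ≤ n t * Real.exp (∫ s in α..t, g t s) := by
  intro T hT
  obtain ⟨hαT, hTβ⟩ := hT
  -- continuity of s ↦ g T s on Icc α T
  have hgT_cont : ContinuousOn (fun s => g T s) (Set.Icc α T) := by
    have : ContinuousOn (fun s : ℝ => ((T, s) : ℝ × ℝ))
        (Set.Icc α T) := (continuous_const.prodMk continuous_id).continuousOn
    exact hg_cont.comp this fun s hs => ⟨hs.1, hs.2, hTβ⟩
  have huT : ContinuousOn u (Set.Icc α T) := hu.mono (Set.Icc_subset_Icc le_rfl hTβ)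
  -- extended functions
  set φ : ℝ → ℝ := Set.IccExtend hαT ((Set.Icc α T).restrict fun s => max (u s) 0) with hφdef
  set k : ℝ → ℝ := Set.IccExtend hαT ((Set.Icc α T).restrict fun s => g T s) with hkdef
  have hφeq : ∀ s ∈ Set.Icc α T, φ s = max (u s) 0 := by
    intro s hs
    simp [hφdef, Set.IccExtend_of_mem hαT _ hs]; rfl
  have hkeq : ∀ s ∈ Set.Icc α T, k s = g T s := by
    intro s hs
    simp [hkdef, Set.IccExtend_of_mem hαT _ hs]; rfl
  have hφc : Continuous φ := by
    apply Continuous.Icc_extend'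
    exact continuousOn_iff_continuous_restrict.mp (fun x hx => (huT x hx).max continuousWithinAt_const)
  have hkc : Continuous k := by
    apply Continuous.Icc_extend'
    exact continuousOn_iff_continuous_restrict.mp hgT_cont
  have hknn : ∀ s ∈ Set.Icc α T, 0 ≤ k s := by
    intro s hs
    rw [hkeq s hs]
    exact hg_nonneg T s hs.1 hs.2 hTβ
  have hnT : 0 < n T := hn_pos T ⟨hαT, hTβ⟩
  -- verify the hypothesis of the auxiliary lemma
  have key : ∀ t ∈ Set.Icc α T, φ t ≤ n T + ∫ s in α..t, k s * φ s := by
    intro t ht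
    have ht' : t ∈ Set.Icc α β := ⟨ht.1, le_trans ht.2 hTβ⟩
    have hint_nn : ∀ s ∈ Set.Icc α t, 0 ≤ k s * φ s := by
      intro s hs
      have hs' : s ∈ Set.Icc α T := ⟨hs.1, le_trans hs.2 ht.2⟩
      have := hφeq s hs'
      exact mul_nonneg (hknn s hs') (by rw [this]; exact le_max_right _ _)
    have hInonneg : 0 ≤ ∫ s in α..t, k s * φ s :=
      intervalIntegral.integral_nonneg ht.1 fun s hs => hint_nn s hs
    rw [hφeq t ht]
    rcases le_total (u t) 0 with hut | hut
    · rw [max_eq_right hut]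
      positivity
    · rw [max_eq_left hut]
      refine le_trans (hineq t ht') ?_
      have hmono_int : (∫ s in α..t, g t s * u s) ≤ ∫ s in α..t, k s * φ s := by
        apply intervalIntegral.integral_mono_on ht.1
        · -- integrability of g t · * u
          apply ContinuousOn.intervalIntegrable_of_Icc ht.1
          apply ContinuousOn.mul ?_ (hu.mono (Set.Icc_subset_Icc le_rfl (le_trans ht.2 hTβ)))
          have hpr : ContinuousOn (fun s : ℝ => ((t, s) : ℝ × ℝ)) (Set.Icc α t) :=
            (continuous_const.prodMk continuous_id).continuousOn
          exact hg_cont.comp hpr fun s hs => ⟨hs.1, hs.2, le_trans ht.2 hTβ⟩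
        · exact (hkc.mul hφc).intervalIntegrable _ _
        · intro s hs
          have hsT : s ∈ Set.Icc α T := ⟨hs.1, le_trans hs.2 ht.2⟩
          rw [hkeq s hsT, hφeq s hsT]
          have hg1 : 0 ≤ g t s := hg_nonneg t s hs.1 hs.2 (le_trans ht.2 hTβ)
          have hg2 : g t s ≤ g T s := hg_mono s t T hs.1 hs.2 ht.2 hTβ
          rcases le_total (u s) 0 with hus | hus
          · rw [max_eq_right hus, mul_zero]
            exact mul_nonpos_of_nonneg_of_nonpos hg1 hus
          · rw [max_eq_left hus]
            exact mul_le_mul_of_nonneg_right hg2 hus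
      have hnt : n t ≤ n T := hn_mono t ht' T ⟨hαT, hTβ⟩ ht.2
      linarith
  have conc := gronwall_aux α T φ k (n T) hφc hkc hknn key T ⟨hαT, le_rfl⟩
  have hKeq : (∫ s in α..T, k s) = ∫ s in α..T, g T s := by
    apply intervalIntegral.integral_congr
    intro s hs
    rw [Set.uIcc_of_le hαT] at hs
    exact hkeq s hs
  rw [hKeq] at conc
  calc u T ≤ max (u T) 0 := le_max_left _ _
    _ = φ T := (hφeq T ⟨hαT, le_rfl⟩).symm
    _ ≤ n T * Real.exp (∫ s in α..T, g T s) := conc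
end

section
/- Truncation error bound: Suppose real-valued functions u_n : [0,∞) → ℝ satisfy u_0(t) ≤ e^{cyt} − 1 and u_n(t) ≤ c y ∫_0^t u_{n−1}(s) ds for all n ≥ 1 and t ≥ 0, with c, y ≥ 0 and each u_n nonnegative and continuous. Then for any ε ∈ (0,1] and any natural M with M ≥ (e+1)cyt + log(1/ε) − 1, one has u_M(t) ≤ ε. -/
open intervalIntegral

private lemma int_pow_aux (a k : ℝ) (m : ℕ) (t : ℝ) :
    k * ∫ s in (0:ℝ)..t, a * (k*s)^m = a * ((k*t)^(m+1)/(m+1)) := by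
  have hFT : ∫ s in (0:ℝ)..t, k * (k*s)^m = (k*t)^(m+1)/(m+1) := by
    have hder : ∀ s ∈ Set.uIcc (0:ℝ) t,
        HasDerivAt (fun s => (k*s)^(m+1)/((m:ℝ)+1)) (k * (k*s)^m) s := by
      intro s _
      have h1 : HasDerivAt (fun s : ℝ => k*s) k s := by
        simpa using (hasDerivAt_id s).const_mul k
      have h2 := (h1.pow (m+1)).div_const ((m:ℝ)+1)
      convert h2 using 1
      · rfl
      · rfl
      · rfl
      have : ((m:ℝ)+1) ≠ 0 := by positivity
      rw [Nat.add_sub_cancel]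
      push_cast
      field_simp
    have hint : IntervalIntegrable (fun s => k * (k*s)^m) MeasureTheory.volume 0 t :=
      (Continuous.intervalIntegrable (by continuity) 0 t)
    rw [intervalIntegral.integral_eq_sub_of_hasDerivAt hder hint]
    simp [zero_pow (Nat.succ_ne_zero m)]
  rw [intervalIntegral.integral_const_mul, ← mul_assoc, mul_comm k a, mul_assoc,
    ← intervalIntegral.integral_const_mul]
  simp only [hFT]

theorem truncation_error_bound (c y : ℝ) (hc : 0 ≤ c) (hy : 0 ≤ y)
    (u : ℕ → ℝ → ℝ)
    (hu_nonneg : ∀ n t, 0 ≤ t → 0 ≤ u n t)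
    (hu_cont : ∀ n, ContinuousOn (u n) (Set.Ici 0))
    (hu0 : ∀ t, 0 ≤ t → u 0 t ≤ Real.exp (c * y * t) - 1)
    (hun : ∀ n t, 0 ≤ t → u (n + 1) t ≤ c * y * ∫ s in (0:ℝ)..t, u n s)
    (ε : ℝ) (hε0 : 0 < ε) (hε1 : ε ≤ 1) (M : ℕ) (t : ℝ) (ht : 0 ≤ t)
    (hM : (Real.exp 1 + 1) * (c * y * t) + Real.log (1 / ε) - 1 ≤ (M : ℝ)) :
    u M t ≤ ε := by
  set k := c * y with hkdef
  have hk : 0 ≤ k := mul_nonneg hc hy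
  -- Key induction: u n t ≤ exp(kt) * (kt)^(n+1) / (n+1)!
  have key : ∀ n, ∀ t, 0 ≤ t →
      u n t ≤ Real.exp (k*t) * (k*t)^(n+1) / (Nat.factorial (n+1) : ℝ) := by
    intro n
    induction n with
    | zero =>
      intro t ht
      have hx : 0 ≤ k * t := mul_nonneg hk ht
      have h1 : Real.exp (k*t) * Real.exp (-(k*t)) = 1 := by
        rw [← Real.exp_add]; simp
      have h2 := Real.add_one_le_exp (-(k*t))
      have h3 := Real.exp_pos (k*t)
      have h4 : Real.exp (k*t) - 1 ≤ (k*t) * Real.exp (k*t) := by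
        nlinarith [mul_le_mul_of_nonneg_left h2 h3.le]
      have := hu0 t ht
      simp only [Nat.factorial, pow_one, Nat.cast_one]
      calc u 0 t ≤ Real.exp (k*t) - 1 := this
        _ ≤ (k*t) * Real.exp (k*t) := h4
        _ = Real.exp (k*t) * (k*t)^(0+1) / ((1:ℕ) * 1 : ℕ) := by push_cast; ring
    | succ n ih =>
      intro t ht
      have huIcc : Set.uIcc (0:ℝ) t = Set.Icc 0 t := Set.uIcc_of_le ht
      have hint1 : IntervalIntegrable (u n) MeasureTheory.volume 0 t := by
        apply ContinuousOn.intervalIntegrable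
        apply (hu_cont n).mono
        rw [huIcc]; exact fun x hx => hx.1
      have hint2 : IntervalIntegrable
          (fun s => (Real.exp (k*t) / (Nat.factorial (n+1) : ℝ)) * (k*s)^(n+1))
          MeasureTheory.volume 0 t :=
        Continuous.intervalIntegrable (by continuity) 0 t
      have mono1 : (∫ s in (0:ℝ)..t, u n s)
          ≤ ∫ s in (0:ℝ)..t, (Real.exp (k*t) / (Nat.factorial (n+1) : ℝ)) * (k*s)^(n+1) := by
        apply intervalIntegral.integral_mono_on ht hint1 hint2
        intro s hs
        calc u n s ≤ Real.exp (k*s) * (k*s)^(n+1) / (Nat.factorial (n+1) : ℝ) := ih s hs.1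
          _ ≤ Real.exp (k*t) * (k*s)^(n+1) / (Nat.factorial (n+1) : ℝ) := by
              have hF : (0:ℝ) < (Nat.factorial (n+1) : ℝ) := by positivity
              have hss : k*s ≤ k*t := mul_le_mul_of_nonneg_left hs.2 hk
              exact (div_le_div_iff_of_pos_right hF).mpr
                (mul_le_mul_of_nonneg_right (Real.exp_le_exp.mpr hss)
                  (pow_nonneg (mul_nonneg hk hs.1) _))
          _ = (Real.exp (k*t) / (Nat.factorial (n+1) : ℝ)) * (k*s)^(n+1) := by ring
      have heq : k * ∫ s in (0:ℝ)..t, (Real.exp (k*t) / (Nat.factorial (n+1) : ℝ)) * (k*s)^(n+1)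
          = Real.exp (k*t) * (k*t)^(n+1+1) / (Nat.factorial (n+1+1) : ℝ) := by
        have h5 : (Nat.factorial (n+2) : ℝ) = ((n:ℝ)+2) * (Nat.factorial (n+1) : ℝ) := by
          rw [Nat.factorial_succ]; push_cast; ring
        have h6 : (Nat.factorial (n+1) : ℝ) ≠ 0 := by positivity
        have h7 : ((n:ℝ)+1+1) ≠ 0 := by positivity
        rw [int_pow_aux, show n+1+1 = n+2 from rfl, h5]
        push_cast
        field_simp
        ring
      calc u (n+1) t ≤ k * ∫ s in (0:ℝ)..t, u n s := hun n t ht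
        _ ≤ k * ∫ s in (0:ℝ)..t, (Real.exp (k*t) / (Nat.factorial (n+1) : ℝ)) * (k*s)^(n+1) :=
            mul_le_mul_of_nonneg_left mono1 hk
        _ = Real.exp (k*t) * (k*t)^(n+1+1) / (Nat.factorial (n+1+1) : ℝ) := heq
  -- Now the tail estimate
  set x := k * t with hxdef
  have hx : 0 ≤ x := mul_nonneg hk ht
  set n := M + 1 with hndef
  have hn0 : (0:ℝ) < (n:ℝ) := by positivity
  have hA : ((n:ℝ))^n / (Nat.factorial n : ℝ) ≤ Real.exp n := by
    refine le_trans ?_ (Real.sum_le_exp_of_nonneg hn0.le (n+1))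
    exact Finset.single_le_sum (f := fun i => ((n:ℝ))^i / (Nat.factorial i : ℝ))
      (fun i _ => by positivity) (Finset.self_mem_range_succ n)
  have h2 : x^n / (Nat.factorial n : ℝ) ≤ Real.exp (Real.exp 1 * x - n) := by
    have hfact : (0:ℝ) < (Nat.factorial n : ℝ) := by positivity
    calc x^n / (Nat.factorial n : ℝ) = (x/n)^n * (((n:ℝ))^n / (Nat.factorial n : ℝ)) := by
          rw [div_pow]; field_simp
      _ ≤ (x/n)^n * Real.exp n := by
          apply mul_le_mul_of_nonneg_left hA (by positivity)
      _ = (Real.exp 1 * (x/n))^n := by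
          rw [mul_pow, mul_comm]
          congr 1
          rw [← Real.exp_nat_mul, mul_one]
      _ ≤ (Real.exp (Real.exp 1 * (x/n) - 1))^n := by
          apply pow_le_pow_left₀ (by positivity)
          have := Real.add_one_le_exp (Real.exp 1 * (x/n) - 1)
          linarith
      _ = Real.exp ((n:ℝ) * (Real.exp 1 * (x/n) - 1)) := (Real.exp_nat_mul _ n).symm
      _ = Real.exp (Real.exp 1 * x - n) := by
          congr 1
          field_simp
  have hlog : Real.log (1/ε) = - Real.log ε := by rw [one_div, Real.log_inv]
  have hMn : Real.exp 1 * x + x - (n:ℝ) ≤ Real.log ε := by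
    have hcast : ((n:ℝ)) = (M:ℝ) + 1 := by push_cast [hndef]; ring
    rw [hcast]
    rw [hlog] at hM
    nlinarith [hM]
  calc u M t ≤ Real.exp x * x^n / (Nat.factorial n : ℝ) := key M t ht
    _ = Real.exp x * (x^n / (Nat.factorial n : ℝ)) := by ring
    _ ≤ Real.exp x * Real.exp (Real.exp 1 * x - n) :=
        mul_le_mul_of_nonneg_left h2 (Real.exp_pos x).le
    _ = Real.exp (Real.exp 1 * x + x - n) := by rw [← Real.exp_add]; ring_nf
    _ ≤ Real.exp (Real.log ε) := Real.exp_le_exp.mpr hMn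
    _ = ε := Real.exp_log hε0
end

section
/- Existence of unitary decomposition of a Hermitian matrix: Let O be a Hermitian n×n complex matrix and γ > 0 such that every eigenvalue d of O satisfies |d − 1| ≤ γ ≤ 1 + d (in particular all eigenvalues are ≥ γ − 1 ≥ −1 and ‖O‖ ≤ 1 + γ). Then there exist unitary matrices U_a and U_b with O = U_a + γ·U_b. -/
lemma scalar_decomp (d γ : ℝ) (hγ : 0 < γ) (h1 : |d - 1| ≤ γ) (h2 : γ ≤ 1 + d) :
    ∃ a b : ℂ, a * star a = 1 ∧ b * star b = 1 ∧ (d : ℂ) = a + (γ : ℂ) * b := by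
  have habs := abs_le.mp h1
  set x : ℝ := (1 + d^2 - γ^2) / (2*d) with hx
  have key : 1 - x^2 ≥ 0 ∧ (d - x)^2 + (1 - x^2) = γ^2 := by
    rcases eq_or_ne d 0 with hd | hd
    · have hg1 : (1:ℝ) ≤ γ := by
        have := habs.1; rw [hd] at this; linarith
      have hg2 : γ ≤ 1 := by rw [hd] at h2; linarith
      have hγ1 : γ = 1 := le_antisymm hg2 hg1
      have hx0 : x = 0 := by simp [hx, hd]
      rw [hx0, hd, hγ1]; norm_num
    · have hd0 : d > 0 := by
        rcases lt_or_gt_of_ne hd with h | h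
        · exfalso; have := habs.1; have := abs_nonneg (d-1); nlinarith [habs.2]
        · exact h
      have hxe : 2*d*x = 1 + d^2 - γ^2 := by
        rw [hx]; field_simp
      have hA : 0 ≤ γ^2 - (d-1)^2 := by
        have := sq_le_sq' habs.1 habs.2; linarith
      have hB : 0 ≤ (d+1)^2 - γ^2 := by nlinarith [h2, hγ.le]
      constructor
      · nlinarith [mul_nonneg hA hB, hxe, sq_nonneg (2*d*x), mul_pos hd0 hd0]
      · nlinarith [hxe]
  obtain ⟨hk1, hk2⟩ := key
  set y : ℝ := Real.sqrt (1 - x^2) with hy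
  have hy2 : y^2 = 1 - x^2 := Real.sq_sqrt hk1
  refine ⟨⟨x, y⟩, ⟨(d - x)/γ, -y/γ⟩, ?_, ?_, ?_⟩
  · rw [Complex.star_def, Complex.mul_conj, Complex.normSq_mk]
    rw [show (1 : ℂ) = ((1:ℝ) : ℂ) by norm_num]
    norm_cast
    nlinarith [hy2]
  · rw [Complex.star_def, Complex.mul_conj, Complex.normSq_mk]
    rw [show (1 : ℂ) = ((1:ℝ) : ℂ) by norm_num]
    norm_cast
    have hγ' : γ ≠ 0 := ne_of_gt hγ
    field_simp
    nlinarith [hy2, hk2]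
  · have hγ' : γ ≠ 0 := ne_of_gt hγ
    apply Complex.ext
    · simp only [Complex.ofReal_re, Complex.add_re, Complex.mul_re, Complex.ofReal_im]
      field_simp
      ring
    · simp only [Complex.ofReal_im, Complex.add_im, Complex.mul_im, Complex.ofReal_re]
      field_simp
      ring

theorem hermitian_unitary_decomposition {n : Type*} [Fintype n] [DecidableEq n]
    (O : Matrix n n ℂ) (hO : O.IsHermitian) (γ : ℝ) (hγ : 0 < γ)
    (heig : ∀ i, |hO.eigenvalues i - 1| ≤ γ ∧ γ ≤ 1 + hO.eigenvalues i) :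
    ∃ Ua Ub : Matrix n n ℂ, Ua ∈ Matrix.unitaryGroup n ℂ ∧
      Ub ∈ Matrix.unitaryGroup n ℂ ∧ O = Ua + (γ : ℂ) • Ub := by
  choose a b ha hb hab using fun i => scalar_decomp (hO.eigenvalues i) γ hγ (heig i).1 (heig i).2
  set V : Matrix n n ℂ := (hO.eigenvectorUnitary : Matrix n n ℂ) with hV
  have hVmem : V ∈ Matrix.unitaryGroup n ℂ := hO.eigenvectorUnitary.2
  have hdiag : ∀ (c : n → ℂ), (∀ i, c i * star (c i) = 1) →
      Matrix.diagonal c ∈ Matrix.unitaryGroup n ℂ := by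
    intro c hc
    rw [Matrix.mem_unitaryGroup_iff]
    rw [Matrix.star_eq_conjTranspose, Matrix.diagonal_conjTranspose,
      Matrix.diagonal_mul_diagonal]
    convert Matrix.diagonal_one with i
    exact hc i
  refine ⟨V * Matrix.diagonal a * star V, V * Matrix.diagonal b * star V, ?_, ?_, ?_⟩
  · exact Submonoid.mul_mem _ (Submonoid.mul_mem _ hVmem (hdiag a ha))
      (Unitary.star_mem hVmem)
  · exact Submonoid.mul_mem _ (Submonoid.mul_mem _ hVmem (hdiag b hb))
      (Unitary.star_mem hVmem)
  · have : Matrix.diagonal (RCLike.ofReal ∘ hO.eigenvalues)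
        = Matrix.diagonal a + (γ : ℂ) • Matrix.diagonal b := by
      ext i j
      rcases eq_or_ne i j with h | h
      · subst h
        simp only [Matrix.diagonal_apply_eq, Matrix.add_apply, Matrix.smul_apply,
          smul_eq_mul, Function.comp_apply]
        simpa using hab i
      · simp [Matrix.diagonal_apply_ne _ h, h]
    have h2 : (γ : ℂ) • (V * Matrix.diagonal b * star V)
        = V * ((γ : ℂ) • Matrix.diagonal b) * star V := by
      rw [Matrix.mul_smul, Matrix.smul_mul]
    rw [h2, ← Matrix.add_mul, ← Matrix.mul_add, ← this]
    exact hO.spectral_theorem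
end
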